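/- Let R be a commutative ring and I an ideal. An R-linear map φ : N → N' is an I-approximation if and only if there exist an R-module Q and submodules M ⊆ P ⊆ Q, M' ⊆ P' ⊆ Q with I·M' ⊆ M ⊆ M', I·P' ⊆ P ⊆ P', together with isomorphisms N ≅ P/M and P'/M' ≅ N' such that φ corresponds under these isomorphisms to the map P/M → P'/M' induced by the inclusions P ⊆ P' and M ⊆ M'. -/

import Mathlib

universe u v w

/-- `φ : N → N'` is an *`I`-approximation* (Definition 4.3 of the paper) if it factors as
`β ∘ α` through some module `Z`, with `α` injective, `β` surjective,
`I · coker α = 0` (i.e. `I • Z ⊆ range α`) and `I · ker β = 0`. -/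
def IsIApprox {R : Type u} [CommRing R] (I : Ideal R)
    {N : Type v} {N' : Type w} [AddCommGroup N] [AddCommGroup N']
    [Module R N] [Module R N'] (φ : N →ₗ[R] N') : Prop :=
  ∃ (Z : Type (max v w)) (_ : AddCommGroup Z) (_ : Module R Z)
    (α : N →ₗ[R] Z) (β : Z →ₗ[R] N'),
      Function.Injective α ∧ Function.Surjective β ∧ β ∘ₗ α = φ ∧
      (∀ a ∈ I, ∀ z : Z, a • z ∈ LinearMap.range α) ∧
      (∀ a ∈ I, ∀ z ∈ LinearMap.ker β, a • z = 0)

/-- Proposition 4.4: `φ : N → N'` is an `I`-approximation iff there are a module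
`Q` and submodules `M ⊆ P`, `M' ⊆ P'` of `Q` with `I·M' ⊆ M ⊆ M'` and `I·P' ⊆ P ⊆ P'`, and
isomorphisms `N ≅ P/M`, `P'/M' ≅ N'` under which `φ` corresponds to the map `P/M → P'/M'`
induced by the inclusions. -/
theorem stmt5_aux {R : Type u} [CommRing R] (I : Ideal R)
    {N : Type v} {N' : Type w} [AddCommGroup N] [AddCommGroup N']
    [Module R N] [Module R N'] (φ : N →ₗ[R] N') :
    IsIApprox I φ ↔
      ∃ (Q : Type (max v w)) (_ : AddCommGroup Q) (_ : Module R Q)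
        (M P M' P' : Submodule R Q)
        (hMP : M ≤ P) (hMP' : M' ≤ P') (hMM' : M ≤ M') (hPP' : P ≤ P'),
        (∀ a ∈ I, ∀ x ∈ M', a • x ∈ M) ∧
        (∀ a ∈ I, ∀ x ∈ P', a • x ∈ P) ∧
        ∃ (eN : N ≃ₗ[R] (↥P ⧸ M.comap P.subtype))
          (eN' : (↥P' ⧸ M'.comap P'.subtype) ≃ₗ[R] N'),
          ∀ x : N,
            eN' (Submodule.mapQ (M.comap P.subtype) (M'.comap P'.subtype)
              (Submodule.inclusion hPP')
              (fun z hz => hMM' hz) (eN x)) = φ x := by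
  constructor
  · rintro ⟨Z, iZ1, iZ2, α, β, hα, hβ, hβα, hI1, hI2⟩
    have hbot : (⊥ : Submodule R Z).comap (LinearMap.range α).subtype = ⊥ := by
      simp
    have hmap : Submodule.map ((Submodule.topEquiv : (⊤ : Submodule R Z) ≃ₗ[R] Z) :
          (⊤ : Submodule R Z) →ₗ[R] Z)
        ((LinearMap.ker β).comap (⊤ : Submodule R Z).subtype) = LinearMap.ker β := by
      ext z
      simp only [Submodule.mem_map, Submodule.mem_comap, Submodule.topEquiv_apply]
      constructor
      · rintro ⟨y, hy, rfl⟩; exact hy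
      · intro hz; exact ⟨⟨z, trivial⟩, hz, rfl⟩
    have hA : ∀ a ∈ I, ∀ x ∈ LinearMap.ker β, a • x ∈ (⊥ : Submodule R Z) := by
      intro a ha x hx
      simpa using hI2 a ha x hx
    have hB : ∀ a ∈ I, ∀ x ∈ (⊤ : Submodule R Z), a • x ∈ LinearMap.range α := by
      intro a ha x _
      exact hI1 a ha x
    refine ⟨Z, iZ1, iZ2, ⊥, LinearMap.range α, LinearMap.ker β, ⊤,
      bot_le, le_top, bot_le, le_top, hA, hB,
      (LinearEquiv.ofInjective α hα).trans
          (Submodule.quotEquivOfEqBot _ hbot).symm,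
      (Submodule.Quotient.equiv ((LinearMap.ker β).comap (⊤ : Submodule R Z).subtype)
          (LinearMap.ker β) Submodule.topEquiv hmap).trans
          (β.quotKerEquivOfSurjective hβ), ?_⟩
    intro x
    simp only [LinearEquiv.trans_apply, Submodule.quotEquivOfEqBot_symm_apply,
      Submodule.mapQ_apply, Submodule.Quotient.equiv_apply]
    show β.quotKerEquivOfSurjective hβ (Submodule.Quotient.mk (α x)) = φ x
    have h3 : β.quotKerEquivOfSurjective hβ (Submodule.Quotient.mk (α x)) = β (α x) := by
      simp [LinearMap.quotKerEquivOfSurjective]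
    rw [h3, ← hβα]
    rfl
  · rintro ⟨Q, _, _, M, P, M', P', hMP, hMP', hMM', hPP', hIM, hIP, eN, eN', hcomm⟩
    refine ⟨↥P' ⧸ M.comap P'.subtype, inferInstance, inferInstance,
      (Submodule.mapQ (M.comap P.subtype) (M.comap P'.subtype) (Submodule.inclusion hPP')
        (fun z hz => hz) : _) ∘ₗ (eN : N →ₗ[R] _),
      (eN' : _ →ₗ[R] N') ∘ₗ
        Submodule.mapQ (M.comap P'.subtype) (M'.comap P'.subtype) LinearMap.id
          (fun z hz => hMM' hz),
      ?_, ?_, ?_, ?_, ?_⟩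
    · -- injective
      simp only [LinearMap.coe_comp, LinearEquiv.coe_coe]
      refine Function.Injective.comp ?_ eN.injective
      rw [← LinearMap.ker_eq_bot, eq_bot_iff]
      rintro x hx
      obtain ⟨y, rfl⟩ := Submodule.Quotient.mk_surjective _ x
      simp only [LinearMap.mem_ker, Submodule.mapQ_apply, Submodule.Quotient.mk_eq_zero,
        Submodule.mem_comap] at hx
      change Submodule.Quotient.mk (Submodule.inclusion hPP' y) =
        (0 : ↥P' ⧸ M.comap P'.subtype) at hx
      rw [Submodule.Quotient.mk_eq_zero, Submodule.mem_comap] at hx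
      simpa [Submodule.Quotient.mk_eq_zero] using hx
    · -- surjective
      simp only [LinearMap.coe_comp, LinearEquiv.coe_coe]
      refine Function.Surjective.comp eN'.surjective ?_
      intro z
      obtain ⟨y, rfl⟩ := Submodule.Quotient.mk_surjective _ z
      exact ⟨Submodule.Quotient.mk y, by simp [Submodule.mapQ_apply]⟩
    · -- composition
      ext x
      simp only [LinearMap.comp_apply, LinearEquiv.coe_coe]
      obtain ⟨y, hy⟩ := Submodule.Quotient.mk_surjective _ (eN x)
      have := hcomm x
      rw [← hy] at this ⊢
      simp only [Submodule.mapQ_apply, LinearMap.id_apply] at this ⊢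
      exact this
    · -- I · coker = 0
      intro a ha z
      obtain ⟨y, rfl⟩ := Submodule.Quotient.mk_surjective _ z
      refine ⟨eN.symm (Submodule.Quotient.mk ⟨a • (y : Q), hIP a ha y y.2⟩), ?_⟩
      simp only [LinearMap.comp_apply, LinearEquiv.coe_coe, LinearEquiv.apply_symm_apply,
        Submodule.mapQ_apply]
      rw [← Submodule.Quotient.mk_smul]
      congr 1
    · -- I · ker = 0
      intro a ha z hz
      obtain ⟨y, rfl⟩ := Submodule.Quotient.mk_surjective _ z
      simp only [LinearMap.mem_ker, LinearMap.comp_apply, LinearEquiv.coe_coe,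
        Submodule.mapQ_apply, LinearMap.id_apply] at hz
      rw [LinearEquiv.map_eq_zero_iff, Submodule.Quotient.mk_eq_zero,
        Submodule.mem_comap] at hz
      rw [← Submodule.Quotient.mk_smul, Submodule.Quotient.mk_eq_zero]
      exact hIM a ha _ hz

theorem stmt5 {R : Type u} [CommRing R] (I : Ideal R)
    {N : Type v} {N' : Type w} [AddCommGroup N] [AddCommGroup N']
    [Module R N] [Module R N'] (φ : N →ₗ[R] N') :
    IsIApprox I φ ↔
      ∃ (Q : Type (max v w)) (_ : AddCommGroup Q) (_ : Module R Q)
        (M P M' P' : Submodule R Q)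
        (hMP : M ≤ P) (hMP' : M' ≤ P') (hMM' : M ≤ M') (hPP' : P ≤ P'),
        (∀ a ∈ I, ∀ x ∈ M', a • x ∈ M) ∧
        (∀ a ∈ I, ∀ x ∈ P', a • x ∈ P) ∧
        ∃ (eN : N ≃ₗ[R] (↥P ⧸ M.comap P.subtype))
          (eN' : (↥P' ⧸ M'.comap P'.subtype) ≃ₗ[R] N'),
          ∀ x : N,
            eN' (Submodule.mapQ (M.comap P.subtype) (M'.comap P'.subtype)
              (Submodule.inclusion hPP')
              (by intro z hz; exact hMM' hz) (eN x)) = φ x := stmt5_aux I φ
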